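/- For every integer n ≥ 2 and every subset T of {1,…,n−1} containing no two consecutive integers, we have the polynomial identity Σ_{S : T ⊆ S ⊆ {1,…,n−1}} ψ_{S,n}(t) = t^{|T|} (1+t)^{n−2|T|} in ℤ[t]. -/

import Mathlib

open Polynomial Finset

/-- `[m]_t = 1 + t + ⋯ + t^(m-1)`, with `[0]_t = 0`. -/
noncomputable def qnum (m : ℕ) : Polynomial ℤ := ∑ i ∈ Finset.range m, X ^ i

/-- Given the previous value `prev` and a (sorted) list `s₁, …, s_ℓ`, the product
`[s₁ - prev - 1]_t · [s₂ - s₁ - 1]_t ⋯ [s_ℓ - s_{ℓ-1} - 1]_t`. -/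
noncomputable def gapProd : ℕ → List ℕ → Polynomial ℤ
  | _, [] => 1
  | prev, s :: rest => qnum (s - prev - 1) * gapProd s rest

/-- For a sorted list `s₁, …, s_ℓ`, the product
`[s₁]_t · [s₂ - s₁ - 1]_t ⋯ [s_ℓ - s_{ℓ-1} - 1]_t`. -/
noncomputable def psiProd : List ℕ → Polynomial ℤ
  | [] => 1
  | s :: rest => qnum s * gapProd s rest

/-- `S` contains no two consecutive integers. -/
def NoTwoConsec (S : Finset ℕ) : Prop := ∀ i ∈ S, i + 1 ∉ S

instance (S : Finset ℕ) : Decidable (NoTwoConsec S) :=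
  inferInstanceAs (Decidable (∀ i ∈ S, i + 1 ∉ S))

/-- The polynomial `ψ_{S,n}(t) ∈ ℤ[t]`: it is `0` unless `S` is a subset of
`[1, n-1]` with no two consecutive integers; `ψ_{∅,n} = [n+1]_t`; and for nonempty
`S = {s₁ < … < s_ℓ}` it equals `t^ℓ [s₁]_t [s₂-s₁-1]_t ⋯ [s_ℓ-s_{ℓ-1}-1]_t` if
`n-1 ∈ S`, and the same times `[n - s_ℓ]_t` if `n-1 ∉ S`. -/
noncomputable def psi (n : ℕ) (S : Finset ℕ) : Polynomial ℤ :=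
  if S ⊆ Finset.Icc 1 (n - 1) ∧ NoTwoConsec S then
    if S = ∅ then qnum (n + 1)
    else X ^ S.card * psiProd (S.sort (· ≤ ·)) *
      (if n - 1 ∈ S then 1 else qnum (n - S.sup id))
  else 0

lemma qnum_succ (m : ℕ) : qnum (m+1) = qnum m + X ^ m := Finset.sum_range_succ _ _
lemma qnum_one : qnum 1 = 1 := by simp [qnum]
lemma qnum_two : qnum 2 = 1 + X := by simp [qnum, Finset.sum_range_succ]
lemma qnum_rec (a : ℕ) : qnum (a+2) = (1+X) * qnum (a+1) - X * qnum a := by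
  have h1 := qnum_succ (a+1); have h2 := qnum_succ a
  rw [h1, h2]; ring

section SortLemmas
lemma gapProd_append (p m : ℕ) (l : List ℕ) :
    gapProd p (l ++ [m]) = gapProd p l * qnum (m - l.getLastD p - 1) := by
  induction l generalizing p with
  | nil => simp [gapProd]
  | cons s rest ih => rw [List.cons_append, gapProd, ih s, gapProd, List.getLastD_cons]; ring

lemma psiProd_append (s m : ℕ) (rest : List ℕ) :
    psiProd ((s :: rest) ++ [m]) = psiProd (s :: rest) * qnum (m - (s :: rest).getLastD 0 - 1) := by
  simp only [List.cons_append, psiProd, gapProd_append, List.getLastD_cons]; ring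

lemma sort_insert_top (S : Finset ℕ) (m : ℕ) (h : ∀ x ∈ S, x < m) :
    (insert m S).sort (· ≤ ·) = S.sort (· ≤ ·) ++ [m] := by
  have hm : m ∉ S := fun hm => lt_irrefl m (h m hm)
  refine (fun hp h2 => List.Perm.eq_of_pairwise' (Finset.pairwise_sort (insert m S) (fun a b : ℕ => a ≤ b)) h2 hp) ?_ ?_
  · rw [← Multiset.coe_eq_coe, Finset.sort_eq, Finset.insert_val,
      Multiset.ndinsert_of_notMem hm]
    rw [show S.val = ↑(S.sort (· ≤ ·)) from (Finset.sort_eq S _).symm]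
    change _ = (↑(S.sort (· ≤ ·)) + ↑[m] : Multiset ℕ)
    rw [add_comm]; rfl
  · rw [List.pairwise_append]
    refine ⟨Finset.pairwise_sort _ _, List.pairwise_singleton _ m, ?_⟩
    intro x hx y hy
    rw [List.mem_singleton] at hy
    subst hy
    exact (h x (by simpa using hx)).le

lemma le_sup_id {S : Finset ℕ} {x : ℕ} (h : x ∈ S) : x ≤ S.sup id := Finset.le_sup (f := id) h

lemma sup_id_eq_max' (S : Finset ℕ) (h : S.Nonempty) : S.sup id = S.max' h :=
  le_antisymm (Finset.sup_le fun x hx => S.le_max' x hx) (Finset.le_sup (f := id) (S.max'_mem h))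

lemma sup_id_mem (S : Finset ℕ) (h : S.Nonempty) : S.sup id ∈ S := by
  rw [sup_id_eq_max' S h]; exact S.max'_mem h

lemma getLastD_sort (S : Finset ℕ) (h : S.Nonempty) :
    (S.sort (· ≤ ·)).getLastD 0 = S.sup id := by
  have hne : S.sort (· ≤ ·) ≠ [] := by
    intro hc
    have := Finset.length_sort (α := ℕ) (· ≤ ·) (s := S)
    rw [hc] at this
    simp only [List.length_nil] at this
    rw [Finset.card_eq_zero.mp this.symm] at h
    simp at h
  rw [sup_id_eq_max' S h, Finset.max'_eq_sorted_last,
    List.getLastD_eq_getLast?, List.getLast?_eq_getLast hne]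
  simp [List.getLast_eq_getElem]

lemma psiProd_insert_top (S : Finset ℕ) (m : ℕ) (hne : S.Nonempty) (h : ∀ x ∈ S, x < m) :
    psiProd ((insert m S).sort (· ≤ ·)) =
      psiProd (S.sort (· ≤ ·)) * qnum (m - S.sup id - 1) := by
  rw [sort_insert_top S m h, ← getLastD_sort S hne]
  obtain ⟨s, rest, hsr⟩ : ∃ s rest, S.sort (· ≤ ·) = s :: rest := by
    cases hs : S.sort (· ≤ ·) with
    | nil =>
        exfalso
        have := Finset.length_sort (α := ℕ) (· ≤ ·) (s := S)
        rw [hs] at this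
        simp only [hs, List.length_nil] at this
        rw [Finset.card_eq_zero.mp this.symm] at hne
        simp at hne
    | cons s rest => exact ⟨s, rest, rfl⟩
  rw [hsr, psiProd_append]
end SortLemmas

section PsiLemmas

lemma psi_zero_of_not_subset {n : ℕ} {S : Finset ℕ} (h : ¬ S ⊆ Finset.Icc 1 (n-1)) :
    psi n S = 0 := by
  rw [psi, if_neg]; tauto

lemma psi_zero_of_not_stable {n : ℕ} {S : Finset ℕ} (h : ¬ NoTwoConsec S) :
    psi n S = 0 := by
  rw [psi, if_neg]; tauto

lemma psi_empty (n : ℕ) : psi n ∅ = qnum (n+1) := by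
  rw [psi, if_pos, if_pos rfl]
  exact ⟨Finset.empty_subset _, fun i hi => by simp at hi⟩

lemma psi_eq {n : ℕ} {S : Finset ℕ} (h1 : S ⊆ Finset.Icc 1 (n-1)) (h2 : NoTwoConsec S)
    (hne : S.Nonempty) :
    psi n S = X ^ S.card * psiProd (S.sort (· ≤ ·)) * qnum (n - S.sup id) := by
  rw [psi, if_pos ⟨h1, h2⟩, if_neg (Finset.nonempty_iff_ne_empty.mp hne)]
  by_cases htop : n - 1 ∈ S
  · rw [if_pos htop]
    have hle : S.sup id ≤ n - 1 := Finset.sup_le fun x hx => (Finset.mem_Icc.mp (h1 hx)).2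
    have hge : n - 1 ≤ S.sup id := le_sup_id htop
    have hn : 1 ≤ n - 1 := (Finset.mem_Icc.mp (h1 htop)).1
    have : n - S.sup id = 1 := by omega
    rw [this, qnum_one]
  · rw [if_neg htop]

/-- Sup bound for subsets of `Icc 1 m`. -/
lemma sup_id_le {S : Finset ℕ} {m : ℕ} (h : S ⊆ Finset.Icc 1 m) : S.sup id ≤ m :=
  Finset.sup_le fun x hx => (Finset.mem_Icc.mp (h hx)).2

lemma stable_subset {S T : Finset ℕ} (h : NoTwoConsec S) (hsub : T ⊆ S) : NoTwoConsec T :=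
  fun i hi hc => h i (hsub hi) (hsub hc)

/-- L1: removing the top element `n-1`. -/
lemma psi_top (n : ℕ) (hn : 2 ≤ n) (S : Finset ℕ) (hS : S ⊆ Finset.Icc 1 (n-1))
    (hm : n - 1 ∈ S) : psi n S = X * psi (n-2) (S.erase (n-1)) := by
  by_cases hst : NoTwoConsec S
  · have hsub' : S.erase (n-1) ⊆ Finset.Icc 1 (n-3) := by
      intro x hx
      have hx1 := Finset.mem_of_mem_erase hx
      have hxne : x ≠ n - 1 := Finset.ne_of_mem_erase hx
      have hxb := Finset.mem_Icc.mp (hS hx1)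
      have hxne2 : x ≠ n - 2 := by
        intro hc
        exact hst x hx1 (by rw [hc, show n - 2 + 1 = n - 1 by omega]; exact hm)
      rw [Finset.mem_Icc]; omega
    have hst' : NoTwoConsec (S.erase (n-1)) := stable_subset hst (Finset.erase_subset _ _)
    have hins : insert (n-1) (S.erase (n-1)) = S := Finset.insert_erase hm
    have hnm : n - 1 ∉ S.erase (n-1) := Finset.notMem_erase _ _
    rcases Finset.eq_empty_or_nonempty (S.erase (n-1)) with he | hne'
    · -- S = {n-1}
      have hS1 : S = {n-1} := by rw [← hins, he]; rfl
      have hsingle : ({n-1} : Finset ℕ) ⊆ Finset.Icc 1 (n-1) := by rwa [← hS1]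
      rw [he, psi_empty, hS1,
        psi_eq hsingle (by rwa [← hS1]) (Finset.singleton_nonempty _)]
      have hsup : ({n-1} : Finset ℕ).sup id = n - 1 := by simp
      rw [hsup, Finset.sort_singleton, Finset.card_singleton,
        show n - (n-1) = 1 by omega, qnum_one, show n - 2 + 1 = n - 1 by omega]
      show X ^ 1 * psiProd [n-1] * 1 = X * qnum (n-1)
      rw [psiProd, gapProd]
      ring
    · -- erase nonempty
      have hm' : (S.erase (n-1)).sup id ≤ n - 3 := sup_id_le hsub'
      have h1m : 1 ≤ (S.erase (n-1)).sup id :=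
        (Finset.mem_Icc.mp (hsub' (sup_id_mem _ hne'))).1
      have hlt : ∀ x ∈ S.erase (n-1), x < n - 1 := by
        intro x hx
        have := Finset.mem_Icc.mp (hsub' hx); omega
      rw [psi_eq hS hst ⟨n-1, hm⟩,
        psi_eq (n := n-2) (by rwa [show n - 2 - 1 = n - 3 by omega]) hst' hne']
      have hsupS : S.sup id = n - 1 :=
        le_antisymm (sup_id_le hS) (le_sup_id hm)
      have hcard : S.card = (S.erase (n-1)).card + 1 := by
        conv_lhs => rw [← hins]
        rw [Finset.card_insert_of_notMem hnm]
      have hps : psiProd (S.sort (· ≤ ·)) =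
          psiProd ((S.erase (n-1)).sort (· ≤ ·)) * qnum (n - 1 - (S.erase (n-1)).sup id - 1) := by
        conv_lhs => rw [← hins]
        rw [psiProd_insert_top _ _ hne' hlt]
      rw [hps, hsupS, show n - (n-1) = 1 by omega, qnum_one, hcard,
        show n - 1 - (S.erase (n-1)).sup id - 1 = n - 2 - (S.erase (n-1)).sup id by omega]
      ring
  · rw [psi_zero_of_not_stable hst]
    by_cases hst' : NoTwoConsec (S.erase (n-1))
    · have hn2 : n - 2 ∈ S := by
        by_contra hn2
        apply hst
        intro i hi hc
        have hi' := Finset.mem_Icc.mp (hS hi)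
        have hc' := Finset.mem_Icc.mp (hS hc)
        by_cases h1 : i = n - 1
        · omega
        · by_cases h2 : i + 1 = n - 1
          · exact hn2 (by rwa [show n - 2 = i by omega])
          · exact hst' i (Finset.mem_erase.mpr ⟨h1, hi⟩) (Finset.mem_erase.mpr ⟨h2, hc⟩)
      have hnotsub : ¬ (S.erase (n-1) ⊆ Finset.Icc 1 (n-2-1)) := by
        intro hsub
        have := Finset.mem_Icc.mp (hsub (Finset.mem_erase.mpr ⟨by omega, hn2⟩))
        omega
      rw [psi_zero_of_not_subset hnotsub, mul_zero]
    · rw [psi_zero_of_not_stable hst', mul_zero]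
end PsiLemmas

/-- L2: three-term recursion. -/
lemma psi_three_term (n : ℕ) (hn : 2 ≤ n) (S : Finset ℕ) (hS : S ⊆ Finset.Icc 1 (n-2)) :
    psi n S = (1+X) * psi (n-1) S - X * psi (n-2) S := by
  by_cases hst : NoTwoConsec S
  · rcases Finset.eq_empty_or_nonempty S with rfl | hne
    · rw [psi_empty, psi_empty, psi_empty]
      obtain ⟨a, rfl⟩ : ∃ a, n = a + 2 := ⟨n - 2, by omega⟩
      rw [show a + 2 - 1 = a + 1 by omega, show a + 2 - 2 = a by omega]
      exact qnum_rec (a+1)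
    · have hS1 : S ⊆ Finset.Icc 1 (n-1) :=
        hS.trans (Finset.Icc_subset_Icc_right (by omega))
      have hS2 : S ⊆ Finset.Icc 1 (n-1-1) := by rwa [show n-1-1 = n-2 by omega]
      have hmle : S.sup id ≤ n - 2 := sup_id_le hS
      have hmge : 1 ≤ S.sup id := (Finset.mem_Icc.mp (hS (sup_id_mem S hne))).1
      rw [psi_eq hS1 hst hne, psi_eq hS2 hst hne]
      by_cases hcase : S.sup id = n - 2
      · have hnotsub : ¬ S ⊆ Finset.Icc 1 (n-2-1) := by
          intro hsub
          have := Finset.mem_Icc.mp (hsub (sup_id_mem S hne)); omega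
        rw [psi_zero_of_not_subset hnotsub, show n - S.sup id = 2 by omega,
          show n - 1 - S.sup id = 1 by omega, qnum_two, qnum_one]
        ring
      · have hsub : S ⊆ Finset.Icc 1 (n-2-1) := by
          intro x hx
          have hx1 := Finset.mem_Icc.mp (hS hx)
          have hx2 := le_sup_id hx
          rw [Finset.mem_Icc]; omega
        rw [psi_eq hsub hst hne]
        obtain ⟨a, ha⟩ : ∃ a, n - S.sup id = a + 2 := ⟨n - S.sup id - 2, by omega⟩
        rw [ha, show n - 1 - S.sup id = a + 1 by omega, show n - 2 - S.sup id = a by omega,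
          qnum_rec]
        ring
  · rw [psi_zero_of_not_stable hst, psi_zero_of_not_stable hst, psi_zero_of_not_stable hst]
    ring

lemma stable_card_bound (T : Finset ℕ) (m : ℕ) (h1 : T ⊆ Finset.Icc 1 m)
    (h2 : NoTwoConsec T) : 2 * T.card ≤ m + 1 := by
  have hdisj : Disjoint T (T.image (· + 1)) := by
    rw [Finset.disjoint_left]
    intro a ha hb
    obtain ⟨t, ht, rfl⟩ := Finset.mem_image.mp hb
    exact h2 t ht ha
  have hsub : T ∪ T.image (· + 1) ⊆ Finset.Icc 1 (m+1) := by
    intro x hx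
    rcases Finset.mem_union.mp hx with h | h
    · have := Finset.mem_Icc.mp (h1 h); rw [Finset.mem_Icc]; omega
    · obtain ⟨t, ht, rfl⟩ := Finset.mem_image.mp h
      have := Finset.mem_Icc.mp (h1 ht); rw [Finset.mem_Icc]; omega
  have hcard := Finset.card_le_card hsub
  have himg : (T.image (· + 1)).card = T.card :=
    Finset.card_image_of_injective _ (fun a b h => by omega)
  have hIcc : (Finset.Icc 1 (m+1)).card = m + 1 := by rw [Nat.card_Icc]; omega
  rw [Finset.card_union_of_disjoint hdisj] at hcard
  omega

/-- The erase bijection for the sum over sets containing `n-1`. -/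
lemma sum_top_bij (n : ℕ) (hn : 2 ≤ n) (T : Finset ℕ) (hTn : n - 1 ∉ T) :
    ∑ S ∈ ((Finset.Icc 1 (n-1)).powerset.filter (fun S => T ⊆ S)).filter
        (fun S => n - 1 ∈ S), psi n S
      = ∑ S' ∈ (Finset.Icc 1 (n-2)).powerset.filter (fun S' => T ⊆ S'), X * psi (n-2) S' := by
  refine Finset.sum_bij' (fun S _ => S.erase (n-1)) (fun S' _ => insert (n-1) S')
    ?_ ?_ ?_ ?_ ?_
  · intro S hS
    simp only [Finset.mem_filter, Finset.mem_powerset] at hS ⊢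
    obtain ⟨⟨hsub, hts⟩, hmem⟩ := hS
    constructor
    · intro x hx
      have hx1 := Finset.mem_of_mem_erase hx
      have hx2 := Finset.ne_of_mem_erase hx
      have := Finset.mem_Icc.mp (hsub hx1)
      rw [Finset.mem_Icc]; omega
    · intro t ht
      exact Finset.mem_erase.mpr ⟨fun hc => hTn (hc ▸ ht), hts ht⟩
  · intro S' hS'
    simp only [Finset.mem_filter, Finset.mem_powerset] at hS' ⊢
    obtain ⟨hsub, hts⟩ := hS'
    refine ⟨⟨?_, hts.trans (Finset.subset_insert _ _)⟩, Finset.mem_insert_self _ _⟩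
    intro x hx
    rcases Finset.mem_insert.mp hx with rfl | hx
    · rw [Finset.mem_Icc]; omega
    · have := Finset.mem_Icc.mp (hsub hx)
      rw [Finset.mem_Icc]; omega
  · intro S hS
    simp only [Finset.mem_filter] at hS
    exact Finset.insert_erase hS.2
  · intro S' hS'
    simp only [Finset.mem_filter, Finset.mem_powerset] at hS'
    apply Finset.erase_insert
    intro hc
    have := Finset.mem_Icc.mp (hS'.1 hc)
    omega
  · intro S hS
    simp only [Finset.mem_filter, Finset.mem_powerset] at hS
    exact psi_top n hn S hS.1.1 hS.2

/-- The erase bijection when `n-1 ∈ T`. -/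
lemma sum_top_bij' (n : ℕ) (hn : 2 ≤ n) (T : Finset ℕ) (hTn : n - 1 ∈ T) :
    ∑ S ∈ (Finset.Icc 1 (n-1)).powerset.filter (fun S => T ⊆ S), psi n S
      = ∑ S' ∈ (Finset.Icc 1 (n-2)).powerset.filter (fun S' => T.erase (n-1) ⊆ S'),
          X * psi (n-2) S' := by
  refine Finset.sum_bij' (fun S _ => S.erase (n-1)) (fun S' _ => insert (n-1) S')
    ?_ ?_ ?_ ?_ ?_
  · intro S hS
    simp only [Finset.mem_filter, Finset.mem_powerset] at hS ⊢
    obtain ⟨hsub, hts⟩ := hS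
    refine ⟨?_, Finset.erase_subset_erase _ hts⟩
    intro x hx
    have hx1 := Finset.mem_of_mem_erase hx
    have hx2 := Finset.ne_of_mem_erase hx
    have := Finset.mem_Icc.mp (hsub hx1)
    rw [Finset.mem_Icc]; omega
  · intro S' hS'
    simp only [Finset.mem_filter, Finset.mem_powerset] at hS' ⊢
    obtain ⟨hsub, hts⟩ := hS'
    constructor
    · intro x hx
      rcases Finset.mem_insert.mp hx with rfl | hx
      · rw [Finset.mem_Icc]; omega
      · have := Finset.mem_Icc.mp (hsub hx)
        rw [Finset.mem_Icc]; omega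
    · intro t ht
      by_cases hc : t = n - 1
      · exact hc ▸ Finset.mem_insert_self _ _
      · exact Finset.mem_insert_of_mem (hts (Finset.mem_erase.mpr ⟨hc, ht⟩))
  · intro S hS
    simp only [Finset.mem_filter] at hS
    exact Finset.insert_erase (hS.2 hTn)
  · intro S' hS'
    simp only [Finset.mem_filter, Finset.mem_powerset] at hS'
    apply Finset.erase_insert
    intro hc
    have := Finset.mem_Icc.mp (hS'.1 hc)
    omega
  · intro S hS
    simp only [Finset.mem_filter, Finset.mem_powerset] at hS
    exact psi_top n hn S hS.1 (hS.2 hTn)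

lemma psi_sum_aux : ∀ n : ℕ, ∀ T : Finset ℕ, T ⊆ Finset.Icc 1 (n-1) → NoTwoConsec T →
    ∑ S ∈ (Finset.Icc 1 (n-1)).powerset.filter (fun S => T ⊆ S), psi n S
      = X ^ T.card * (1+X) ^ (n - 2 * T.card) := by
  intro n
  induction n using Nat.strong_induction_on with
  | _ n ih =>
  intro T hT1 hT2
  by_cases hn2 : n < 2
  · -- base cases n = 0, 1
    have hIcc : Finset.Icc 1 (n-1) = ∅ := by
      rw [show n - 1 = 0 by omega]
      exact Finset.Icc_eq_empty (by omega)
    have hTe : T = ∅ := Finset.subset_empty.mp (hIcc ▸ hT1)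
    subst hTe
    rw [hIcc, Finset.powerset_empty, Finset.filter_singleton,
      if_pos (Finset.Subset.refl _), Finset.sum_singleton, psi_empty, Finset.card_empty]
    interval_cases n
    · rw [qnum_one]; norm_num
    · rw [qnum_two]; norm_num
  · push_neg at hn2
    by_cases hTop : n - 1 ∈ T
    · -- Case A
      have hcard1 : 1 ≤ T.card := Finset.card_pos.mpr ⟨n-1, hTop⟩
      have hbound : 2 * T.card ≤ n := by
        have := stable_card_bound T (n-1) hT1 hT2; omega
      have hT'sub : T.erase (n-1) ⊆ Finset.Icc 1 (n-3) := by
        intro x hx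
        have hx1 := Finset.mem_of_mem_erase hx
        have hx2 := Finset.ne_of_mem_erase hx
        have hxb := Finset.mem_Icc.mp (hT1 hx1)
        have hxne2 : x ≠ n - 2 := by
          intro hc
          exact hT2 x hx1 (by rw [hc, show n - 2 + 1 = n - 1 by omega]; exact hTop)
        rw [Finset.mem_Icc]; omega
      have hT'st : NoTwoConsec (T.erase (n-1)) := stable_subset hT2 (Finset.erase_subset _ _)
      rw [sum_top_bij' n hn2 T hTop, ← Finset.mul_sum]
      have hshrink : ∑ S' ∈ (Finset.Icc 1 (n-2)).powerset.filter
            (fun S' => T.erase (n-1) ⊆ S'), psi (n-2) S'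
          = ∑ S' ∈ (Finset.Icc 1 (n-2-1)).powerset.filter
            (fun S' => T.erase (n-1) ⊆ S'), psi (n-2) S' := by
        symm
        apply Finset.sum_subset
        · apply Finset.filter_subset_filter
          exact Finset.powerset_mono.mpr (Finset.Icc_subset_Icc_right (by omega))
        · intro S' hmem hnot
          apply psi_zero_of_not_subset
          intro hsub
          apply hnot
          rw [Finset.mem_filter, Finset.mem_powerset]
          exact ⟨hsub, (Finset.mem_filter.mp hmem).2⟩
      rw [hshrink, ih (n-2) (by omega) (T.erase (n-1))
        (by rwa [show n - 2 - 1 = n - 3 by omega]) hT'st]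
      have hec : (T.erase (n-1)).card = T.card - 1 := Finset.card_erase_of_mem hTop
      rw [hec, show n - 2 - 2 * (T.card - 1) = n - 2 * T.card by omega,
        show T.card = (T.card - 1) + 1 by omega, pow_succ,
        show T.card - 1 + 1 - 1 = T.card - 1 by omega]
      ring
    · -- Case B
      have hTsub2 : T ⊆ Finset.Icc 1 (n-2) := by
        intro t ht
        have := Finset.mem_Icc.mp (hT1 ht)
        have : t ≠ n - 1 := fun hc => hTop (hc ▸ ht)
        rw [Finset.mem_Icc]
        have := Finset.mem_Icc.mp (hT1 ht)
        omega
      have hbound : 2 * T.card ≤ n - 1 := by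
        have := stable_card_bound T (n-2) hTsub2 hT2; omega
      rw [← Finset.sum_filter_add_sum_filter_not
        ((Finset.Icc 1 (n-1)).powerset.filter (fun S => T ⊆ S)) (fun S => n - 1 ∈ S)]
      have hpart2 : ((Finset.Icc 1 (n-1)).powerset.filter (fun S => T ⊆ S)).filter
            (fun S => ¬ n - 1 ∈ S)
          = (Finset.Icc 1 (n-2)).powerset.filter (fun S => T ⊆ S) := by
        ext S
        simp only [Finset.mem_filter, Finset.mem_powerset]
        constructor
        · rintro ⟨⟨hs, hts⟩, hnm⟩
          refine ⟨?_, hts⟩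
          intro x hx
          have := Finset.mem_Icc.mp (hs hx)
          have : x ≠ n - 1 := fun hc => hnm (hc ▸ hx)
          rw [Finset.mem_Icc]
          have := Finset.mem_Icc.mp (hs hx)
          omega
        · rintro ⟨hs, hts⟩
          refine ⟨⟨hs.trans (Finset.Icc_subset_Icc_right (by omega)), hts⟩, fun hmem => ?_⟩
          have := Finset.mem_Icc.mp (hs hmem)
          omega
      rw [sum_top_bij n hn2 T hTop, hpart2]
      rw [Finset.sum_congr rfl (fun S hS => psi_three_term n hn2 S
        (Finset.mem_powerset.mp (Finset.mem_filter.mp hS).1))]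
      rw [← Finset.sum_add_distrib]
      rw [Finset.sum_congr rfl (fun S _ => show
        X * psi (n-2) S + ((1+X) * psi (n-1) S - X * psi (n-2) S) = (1+X) * psi (n-1) S
        by ring)]
      rw [← Finset.mul_sum]
      have := ih (n-1) (by omega) T (by rwa [show n - 1 - 1 = n - 2 by omega]) hT2
      rw [show n - 1 - 1 = n - 2 by omega] at this
      rw [this, show n - 2 * T.card = (n - 1 - 2 * T.card) + 1 by omega, pow_succ]
      ring

/-- Lemma (augmented Chow identity): for `n ≥ 2` and `T ∈ Stab([1, n-1])`,
`∑_{T ⊆ S ⊆ [1, n-1]} ψ_{S,n}(t) = t^{|T|} (1+t)^{n-2|T|}`. -/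
theorem psi_interval_sum (n : ℕ) (hn : 2 ≤ n) (T : Finset ℕ)
    (hT1 : T ⊆ Finset.Icc 1 (n - 1)) (hT2 : NoTwoConsec T) :
    ∑ S ∈ (Finset.Icc 1 (n - 1)).powerset.filter (fun S => T ⊆ S), psi n S =
      X ^ T.card * (1 + X) ^ (n - 2 * T.card) := by
  exact psi_sum_aux n T hT1 hT2
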